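/- A matrix M ∈ F^{m×n} has rank at most r if and only if there exists a matrix C ∈ F^{r×(n-r)} and a permutation σ of the columns of M such that M·σ·(I_{n-r} ; C)ᵀ = 0; in particular, if the last r columns of M span the column space of M, then there exists C ∈ F^{r×(n-r)} with M·(I_{n-r}; C stacked) = 0, i.e. for each j ≤ n-r, the j-th column of M equals minus the combination of the last r columns with coefficients given by the j-th column of C. -/

import Mathlib

open Matrix

private lemma mul_fromRows_apply' {F : Type*} [Field F] {m s r : ℕ}
    (N : Matrix (Fin m) (Fin s ⊕ Fin r) F) (C : Matrix (Fin r) (Fin s) F)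
    (i : Fin m) (j : Fin s) :
    (N * Matrix.fromRows (1 : Matrix (Fin s) (Fin s) F) C) i j
      = N i (Sum.inl j) + ∑ k, N i (Sum.inr k) * C k j := by
  rw [Matrix.mul_apply, Fintype.sum_sum_type]
  simp [Matrix.one_apply, Finset.sum_ite_eq']

private lemma exists_C' {F : Type*} [Field F] {m s r : ℕ}
    (N : Matrix (Fin m) (Fin s ⊕ Fin r) F)
    (h : ∀ j : Fin s, (fun i => N i (Sum.inl j)) ∈
        Submodule.span F (Set.range fun k : Fin r => fun i => N i (Sum.inr k))) :
    ∃ C : Matrix (Fin r) (Fin s) F,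
      N * Matrix.fromRows (1 : Matrix (Fin s) (Fin s) F) C = 0 := by
  choose c hc using fun j => (Submodule.mem_span_range_iff_exists_fun F).mp (h j)
  refine ⟨Matrix.of fun k j => -(c j k), ?_⟩
  ext i j
  rw [mul_fromRows_apply']
  have h2 : ∑ k, N i (Sum.inr k) * c j k = N i (Sum.inl j) := by
    rw [← congrFun (hc j) i]
    simp [Finset.sum_apply, mul_comm]
  simp only [Matrix.of_apply, mul_neg, Matrix.zero_apply]
  rw [Finset.sum_neg_distrib, h2, add_neg_cancel]

private lemma span_le_of_C' {F : Type*} [Field F] {m s r : ℕ}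
    (N : Matrix (Fin m) (Fin s ⊕ Fin r) F) (C : Matrix (Fin r) (Fin s) F)
    (hC : N * Matrix.fromRows (1 : Matrix (Fin s) (Fin s) F) C = 0) :
    Submodule.span F (Set.range fun j : Fin s ⊕ Fin r => (fun i => N i j)) ≤
      Submodule.span F (Set.range fun k : Fin r => (fun i => N i (Sum.inr k))) := by
  rw [Submodule.span_le]
  rintro _ ⟨x, rfl⟩
  cases x with
  | inr k => exact Submodule.subset_span ⟨k, rfl⟩
  | inl j =>
    refine (Submodule.mem_span_range_iff_exists_fun F).mpr ⟨fun k => -(C k j), ?_⟩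
    funext i
    have h0 : N i (Sum.inl j) + ∑ k, N i (Sum.inr k) * C k j = 0 := by
      rw [← mul_fromRows_apply', hC]; rfl
    simp only [Finset.sum_apply, Pi.smul_apply, smul_eq_mul, neg_mul]
    have : ∑ k, -(C k j * N i (Sum.inr k)) = -∑ k, N i (Sum.inr k) * C k j := by
      simp [mul_comm]
    rw [this]
    exact (eq_neg_of_add_eq_zero_left h0).symm

theorem statement3 {F : Type*} [Field F] (m s r : ℕ)
    (M : Matrix (Fin m) (Fin s ⊕ Fin r) F) :
    (M.rank ≤ r ↔ ∃ (σ : Equiv.Perm (Fin s ⊕ Fin r)) (C : Matrix (Fin r) (Fin s) F),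
        M.submatrix id σ * Matrix.fromRows (1 : Matrix (Fin s) (Fin s) F) C = 0) ∧
    ((Submodule.span F (Set.range fun j : Fin s ⊕ Fin r => (fun i => M i j)) ≤
        Submodule.span F (Set.range fun j : Fin r => (fun i => M i (Sum.inr j)))) →
      ∃ C : Matrix (Fin r) (Fin s) F, M * Matrix.fromRows (1 : Matrix (Fin s) (Fin s) F) C = 0) := by
  classical
  have hpart2 : ∀ N : Matrix (Fin m) (Fin s ⊕ Fin r) F,
      (Submodule.span F (Set.range fun j : Fin s ⊕ Fin r => (fun i => N i j)) ≤
        Submodule.span F (Set.range fun j : Fin r => (fun i => N i (Sum.inr j)))) →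
      ∃ C : Matrix (Fin r) (Fin s) F,
        N * Matrix.fromRows (1 : Matrix (Fin s) (Fin s) F) C = 0 := by
    intro N hle
    exact exists_C' N fun j => hle (Submodule.subset_span ⟨Sum.inl j, rfl⟩)
  refine ⟨⟨?_, ?_⟩, hpart2 M⟩
  · -- forward: rank ≤ r → ∃ σ C
    intro hr
    rw [Matrix.rank_eq_finrank_span_cols] at hr
    obtain ⟨b, hbsub, hbspan, hbind⟩ := exists_linearIndependent F (Set.range Mᵀ)
    haveI : Fintype b := ((Set.finite_range Mᵀ).subset hbsub).fintype
    have hcardb : b.toFinset.card ≤ r := by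
      rw [← finrank_span_set_eq_card hbind, hbspan]; exact hr
    have hex : ∀ x : b, ∃ j, Mᵀ j = x := fun x => hbsub x.2
    choose idx hidx using hex
    set I : Finset (Fin s ⊕ Fin r) := Finset.univ.image idx with hI
    have hIcard : I.card ≤ r := by
      refine le_trans (Finset.card_image_le.trans ?_) hcardb
      rw [Finset.card_univ, Set.toFinset_card]
    obtain ⟨J, hIJ, -, hJcard⟩ := Finset.exists_subsuperset_card_eq (Finset.subset_univ I)
      hIcard (by simp [Finset.card_univ])
    have hJc : Fintype.card {x // x ∈ J} = r := by rw [Fintype.card_coe]; exact hJcard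
    have hJcc : Fintype.card {x : Fin s ⊕ Fin r // x ∉ J} = s := by
      rw [Fintype.card_subtype_compl, hJc]; simp
    let e1 : {x // x ∈ J} ≃ Fin r := Fintype.equivFinOfCardEq hJc
    let e2 : {x : Fin s ⊕ Fin r // x ∉ J} ≃ Fin s := Fintype.equivFinOfCardEq hJcc
    let σ : Equiv.Perm (Fin s ⊕ Fin r) :=
      ((Equiv.sumCompl (fun x => x ∈ J)).symm.trans
        ((Equiv.sumCongr e1 e2).trans (Equiv.sumComm (Fin r) (Fin s)))).symm
    have hσr : ∀ k : Fin r, σ (Sum.inr k) = (e1.symm k : Fin s ⊕ Fin r) := fun k => rfl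
    have hrange : (Set.range fun k : Fin r => σ (Sum.inr k)) = ↑J := by
      ext x
      constructor
      · rintro ⟨k, rfl⟩; exact (e1.symm k).2
      · intro hx; exact ⟨e1 ⟨x, hx⟩, by show σ (Sum.inr (e1 ⟨x, hx⟩)) = x; rw [hσr, Equiv.symm_apply_apply]⟩
    set N := M.submatrix id σ with hN
    refine ⟨σ, ?_⟩
    apply hpart2
    -- span of all columns of N ≤ span of inr columns of N
    have hNcols : (Set.range fun j : Fin s ⊕ Fin r => (fun i => N i j)) ⊆
        Set.range Mᵀ := by rintro _ ⟨x, rfl⟩; exact ⟨σ x, rfl⟩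
    have hinr : (Set.range fun j : Fin r => (fun i => N i (Sum.inr j))) =
        Mᵀ '' ↑J := by
      rw [← hrange]
      ext v
      constructor
      · rintro ⟨k, rfl⟩; exact ⟨σ (Sum.inr k), ⟨k, rfl⟩, rfl⟩
      · rintro ⟨_, ⟨k, rfl⟩, rfl⟩; exact ⟨k, rfl⟩
    rw [hinr]
    refine le_trans (Submodule.span_mono hNcols) ?_
    rw [← hbspan]
    refine Submodule.span_mono ?_
    intro x hx
    exact ⟨idx ⟨x, hx⟩, hIJ (Finset.mem_image_of_mem idx (Finset.mem_univ _)), hidx ⟨x, hx⟩⟩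
  · -- backward: ∃ σ C → rank ≤ r
    rintro ⟨σ, C, hC⟩
    have hle := span_le_of_C' _ _ hC
    rw [Matrix.rank_eq_finrank_span_cols]
    have hre : Set.range Mᵀ =
        Set.range fun j : Fin s ⊕ Fin r => (fun i => (M.submatrix id σ) i j) := by
      ext v
      constructor
      · rintro ⟨x, rfl⟩; exact ⟨σ.symm x, by simp [Matrix.submatrix_apply]; rfl⟩
      · rintro ⟨x, rfl⟩; exact ⟨σ x, rfl⟩
    change Module.finrank F (Submodule.span F (Set.range Mᵀ)) ≤ r
    rw [hre]
    refine le_trans (Submodule.finrank_mono hle) ?_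
    have := finrank_range_le_card (R := F)
      (fun k : Fin r => (fun i => (M.submatrix id σ) i (Sum.inr k)))
    rw [Set.finrank] at this
    simpa using this
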